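/- arXiv:1901.08057 — 3 statements merged into one kernel-verified Lean document; each statement's English description precedes it below -/
import Mathlib

section
/- For the DWD loss with q = 1, given by V(u) = 1-u for u ≤ 1/2 and V(u) = 1/(4u) for u > 1/2, and any b > 0: if a ≤ 1/2 - b then the proximal map ψ(a,b) = argmin_u { V(u) + (u-a)²/(2b) } equals a + b; if a > 1/2 - b then ψ(a,b) is the unique real solution u > 1/2 of the cubic equation 4u³ - 4au² - b = 0. -/
set_option maxHeartbeats 1600000


/-- For the DWD loss with `q = 1`, `V u = 1 - u` for `u ≤ 1/2` and `V u = 1/(4u)` for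
`u > 1/2`, and any `b > 0`: if `a ≤ 1/2 - b` then the minimizer `ψ` of
`u ↦ V u + (u-a)^2/(2b)` equals `a + b`; if `a > 1/2 - b` then `ψ` is the unique real
solution `u > 1/2` of the cubic `4u³ - 4au² - b = 0`. -/
theorem stmt_2 (a b : ℝ) (hb : 0 < b) (ψ : ℝ)
    (hψ : ∀ u : ℝ,
      (if ψ ≤ 1 / 2 then 1 - ψ else 1 / (4 * ψ)) + (ψ - a) ^ 2 / (2 * b) ≤
      (if u ≤ 1 / 2 then 1 - u else 1 / (4 * u)) + (u - a) ^ 2 / (2 * b)) :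
    (a ≤ 1 / 2 - b → ψ = a + b) ∧
    (1 / 2 - b < a →
      1 / 2 < ψ ∧ 4 * ψ ^ 3 - 4 * a * ψ ^ 2 - b = 0 ∧
      ∀ u : ℝ, 1 / 2 < u → 4 * u ^ 3 - 4 * a * u ^ 2 - b = 0 → u = ψ) := by
  constructor
  · -- Case 1: a ≤ 1/2 - b
    intro h1
    have hm : a + b ≤ 1 / 2 := by linarith
    have hm' := hψ (a + b)
    rw [if_pos hm] at hm'
    by_cases hψh : ψ ≤ 1 / 2
    · rw [if_pos hψh] at hm'
      have e : (1 - ψ) + (ψ - a) ^ 2 / (2 * b)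
          - ((1 - (a + b)) + ((a + b) - a) ^ 2 / (2 * b))
          = (ψ - (a + b)) ^ 2 / (2 * b) := by
        field_simp
        ring
      have h2 : (ψ - (a + b)) ^ 2 / (2 * b) ≤ 0 := by linarith
      have h3 : (ψ - (a + b)) ^ 2 ≤ 0 := by
        rw [div_le_iff₀ (by positivity)] at h2
        linarith
      have : ψ - (a + b) = 0 := by nlinarith [sq_nonneg (ψ - (a + b))]
      linarith
    · exfalso
      push_neg at hψh
      rw [if_neg (not_le.2 hψh)] at hm'
      have hψ0 : (0:ℝ) < ψ := by linarith
      have e : 1 / (4 * ψ) + (ψ - a) ^ 2 / (2 * b)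
          - ((1 - (a + b)) + ((a + b) - a) ^ 2 / (2 * b))
          = (2 * ψ - 1) ^ 2 / (4 * ψ) + (ψ - (a + b)) ^ 2 / (2 * b) := by
        field_simp
        ring
      have h2 : 0 < (2 * ψ - 1) ^ 2 / (4 * ψ) :=
        div_pos (pow_pos (by linarith) 2) (by linarith)
      have h3 : 0 ≤ (ψ - (a + b)) ^ 2 / (2 * b) := by positivity
      linarith
  · -- Case 2: 1/2 - b < a
    intro h2
    have hhalf : 1 / 2 < ψ := by
      by_contra hc
      push_neg at hc
      -- f(ψ) ≥ f(1/2)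
      set ε := a + b - 1 / 2 with hε
      have hεpos : 0 < ε := by simp [hε]; linarith
      set M := max (3 / 2 - 2 * a) 0 with hM
      have hM0 : 0 ≤ M := le_max_right _ _
      have hMa : 3 / 2 - 2 * a ≤ M := le_max_left _ _
      set t := min 1 (ε / (2 * (1 + M))) with ht
      have ht0 : 0 < t := lt_min one_pos (by positivity)
      have ht1 : t ≤ 1 := min_le_left _ _
      have ht2 : t ≤ ε / (2 * (1 + M)) := min_le_right _ _
      clear_value ε M t
      have ht2' : t * (2 * (1 + M)) ≤ ε := (le_div_iff₀ (by positivity)).mp ht2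
      have htM : t * (1 + M) ≤ ε / 2 := by nlinarith [ht2']
      have key : (1 / 2 + t) * (t + 1 - 2 * a) < b := by
        nlinarith [mul_nonneg ht0.le (sub_nonneg.2 ht1),
          mul_nonneg ht0.le (sub_nonneg.2 hMa)]
      have hu₀h : 1 / 2 < 1 / 2 + t := by linarith
      have hu₀pos : (0:ℝ) < 1 / 2 + t := by linarith
      have hineq := hψ (1 / 2 + t)
      rw [if_pos hc, if_neg (not_le.2 hu₀h)] at hineq
      have eL : (1 - ψ) + (ψ - a) ^ 2 / (2 * b)
          - (1 / 2 + (1 / 2 - a) ^ 2 / (2 * b))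
          = (1 / 2 - ψ) * (2 * b + 2 * a - ψ - 1 / 2) / (2 * b) := by
        field_simp
        ring
      have hL : 0 ≤ (1 / 2 - ψ) * (2 * b + 2 * a - ψ - 1 / 2) / (2 * b) := by
        apply div_nonneg _ (by positivity)
        apply mul_nonneg (by linarith) (by linarith)
      have e1 : 1 / (4 * (1 / 2 + t)) = 1 / 2 - t / (2 * (1 / 2 + t)) := by
        rw [eq_sub_iff_add_eq, div_add_div _ _ (by positivity) (by positivity),
          div_eq_div_iff (by positivity) (by positivity)]
        ring
      have e2 : ((1 / 2 + t) - a) ^ 2 / (2 * b) - (1 / 2 - a) ^ 2 / (2 * b)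
          = t * (t + 1 - 2 * a) / (2 * b) := by
        rw [div_sub_div_same]
        congr 1
        ring
      have e3 : t * (t + 1 - 2 * a) / (2 * b) < t / (2 * (1 / 2 + t)) := by
        rw [div_lt_div_iff₀ (by positivity) (by positivity)]
        nlinarith [mul_lt_mul_of_pos_left key (by linarith : (0:ℝ) < 2 * t)]
      linarith
    have hψ0 : (0:ℝ) < ψ := by linarith
    have hcubic : 4 * ψ ^ 3 - 4 * a * ψ ^ 2 - b = 0 := by
      have hd1 : HasDerivAt (fun u : ℝ => 1 / (4 * u) + (u - a) ^ 2 / (2 * b))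
          (-(4 * 1) / (4 * ψ) ^ 2 + (↑2 * (ψ - a) ^ (2 - 1) * 1) / (2 * b)) ψ := by
        apply HasDerivAt.add
        · have hinv := (((hasDerivAt_id ψ).const_mul (4:ℝ)).inv (by positivity))
          have e : (fun u : ℝ => 1 / (4 * u)) = (fun y => 4 * id y)⁻¹ := by
            funext u
            simp [one_div]
          rw [e]
          exact hinv
        · exact (((hasDerivAt_id ψ).sub_const a).pow 2).div_const (2 * b)
      have hmin : IsLocalMin (fun u : ℝ => 1 / (4 * u) + (u - a) ^ 2 / (2 * b)) ψ := by
        filter_upwards [Ioi_mem_nhds hhalf] with u hu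
        have h := hψ u
        rw [if_neg (not_le.2 hhalf), if_neg (not_le.2 hu)] at h
        exact h
      have h0 := hmin.hasDerivAt_eq_zero hd1
      have hψne : ψ ≠ 0 := ne_of_gt hψ0
      have hbne : b ≠ 0 := ne_of_gt hb
      field_simp at h0
      norm_num at h0
      nlinarith [h0, sq_nonneg ψ]
    refine ⟨hhalf, hcubic, ?_⟩
    intro u hu hcu
    have hψa : a < ψ := by
      by_contra h
      push_neg at h
      nlinarith [mul_nonneg (sq_nonneg ψ) (sub_nonneg.2 h)]
    have hua : a < u := by
      by_contra h
      push_neg at h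
      nlinarith [mul_nonneg (sq_nonneg u) (sub_nonneg.2 h)]
    have key : (u - ψ) * (u ^ 2 + u * ψ + ψ ^ 2 - a * (u + ψ)) = 0 := by
      linear_combination (hcu - hcubic) / 4
    have hpos : 0 < u ^ 2 + u * ψ + ψ ^ 2 - a * (u + ψ) := by
      nlinarith [mul_pos (by linarith : (0:ℝ) < u) (by linarith : 0 < u - a),
        mul_pos hψ0 (by linarith : 0 < ψ - a),
        mul_pos (by linarith : (0:ℝ) < u) hψ0]
    have := mul_eq_zero.mp key
    rcases this with h | h
    · linarith
    · linarith
end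

section
/- Let z ~ N(0,1), b > 0, and let ψ(a,b) be the hinge-loss proximal map. Define f₁(m) = E[ψ(m + z, b) - m - z]. Then f₁(m) = b·Φ(1 - b - m) + ∫_{1-b-m}^{1-m} (1 - m - z)·φ(z) dz, where φ and Φ are the standard normal pdf and cdf; in particular f₁ is nonnegative, continuous, and nonincreasing in m. -/
open MeasureTheory ProbabilityTheory

/-- The hinge prox candidate `a + min b (max (1-a) 0)` is a minimizer. -/
lemma hinge_prox_min (b : ℝ) (hb : 0 < b) (a u : ℝ) :
    max (1 - (a + min b (max (1 - a) 0))) 0 + ((a + min b (max (1 - a) 0)) - a) ^ 2 / (2 * b) ≤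
      max (1 - u) 0 + (u - a) ^ 2 / (2 * b) := by
  have hM1 : 1 - u ≤ max (1 - u) 0 := le_max_left _ _
  have hM0 : (0 : ℝ) ≤ max (1 - u) 0 := le_max_right _ _
  rcases le_or_gt b (1 - a) with h1 | h1
  · -- a ≤ 1 - b : candidate is a + b
    have hmin : min b (max (1 - a) 0) = b := min_eq_left (le_max_of_le_left h1)
    rw [hmin]
    have h2 : max (1 - (a + b)) 0 = 1 - (a + b) := max_eq_left (by linarith)
    rw [h2]
    have h3 : 1 - (a + b) + (a + b - a) ^ 2 / (2 * b) ≤ (1 - u) + (u - a) ^ 2 / (2 * b) := by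
      rw [← sub_nonneg]
      have e : (1 - u) + (u - a) ^ 2 / (2 * b) - (1 - (a + b) + (a + b - a) ^ 2 / (2 * b))
          = (u - a - b) ^ 2 / (2 * b) := by
        field_simp
        ring
      rw [e]
      positivity
    linarith
  · rcases le_or_gt 0 (1 - a) with h2 | h2
    · -- 1 - b < a ≤ 1 : candidate is 1
      have hmin : min b (max (1 - a) 0) = 1 - a := by
        rw [max_eq_left h2]; exact min_eq_right h1.le
      rw [hmin]
      have hc : a + (1 - a) = 1 := by ring
      rw [hc]
      have h3 : max (1 - 1) 0 = (0 : ℝ) := by norm_num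
      rw [h3, zero_add]
      have e : (1 - a) ^ 2 / (2 * b) = (1 - a) ^ 2 / (2 * b) := rfl
      rcases le_or_gt u 1 with hu | hu
      · have key : (1 - a) ^ 2 / (2 * b) ≤ (1 - u) + (u - a) ^ 2 / (2 * b) := by
          rw [← sub_nonneg]
          have e : (1 - u) + (u - a) ^ 2 / (2 * b) - (1 - a) ^ 2 / (2 * b)
              = (1 - u) * ((1 - u) + 2 * (a + b - 1)) / (2 * b) := by
            field_simp
            ring
          rw [e]
          apply div_nonneg _ (by positivity)
          apply mul_nonneg (by linarith)
          linarith
        linarith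
      · have key : (1 - a) ^ 2 ≤ (u - a) ^ 2 := by nlinarith
        have h4 : (1 - a) ^ 2 / (2 * b) ≤ (u - a) ^ 2 / (2 * b) :=
          (div_le_div_iff_of_pos_right (by positivity : (0:ℝ) < 2 * b)).2 key
        linarith
    · -- a > 1 : candidate is a
      have hmin : min b (max (1 - a) 0) = 0 := by
        rw [max_eq_right h2.le]; exact min_eq_right hb.le
      rw [hmin, add_zero]
      have h3 : max (1 - a) 0 = (0 : ℝ) := max_eq_right h2.le
      rw [h3]
      have h4 : (a - a) ^ 2 / (2 * b) = 0 := by simp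
      rw [h4, add_zero]
      positivity

/-- The minimizer is unique, so `ψ a = a + min b (max (1-a) 0)`. -/
lemma hinge_prox_eq (b : ℝ) (hb : 0 < b) (ψ : ℝ → ℝ)
    (hψ : ∀ a u : ℝ, max (1 - ψ a) 0 + (ψ a - a) ^ 2 / (2 * b) ≤
      max (1 - u) 0 + (u - a) ^ 2 / (2 * b)) (a : ℝ) :
    ψ a = a + min b (max (1 - a) 0) := by
  set c : ℝ := a + min b (max (1 - a) 0) with hc
  set x : ℝ := ψ a with hx
  -- equality of minimum values
  have h1 : max (1 - x) 0 + (x - a) ^ 2 / (2 * b) ≤ max (1 - c) 0 + (c - a) ^ 2 / (2 * b) :=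
    hψ a c
  have h2 : max (1 - c) 0 + (c - a) ^ 2 / (2 * b) ≤ max (1 - x) 0 + (x - a) ^ 2 / (2 * b) :=
    hinge_prox_min b hb a x
  have heq : max (1 - x) 0 + (x - a) ^ 2 / (2 * b) = max (1 - c) 0 + (c - a) ^ 2 / (2 * b) :=
    le_antisymm h1 h2
  -- midpoint
  set m : ℝ := (x + c) / 2 with hm
  have hmax : max (1 - m) 0 ≤ (max (1 - x) 0 + max (1 - c) 0) / 2 := by
    apply max_le
    · have : (1 : ℝ) - m = ((1 - x) + (1 - c)) / 2 := by rw [hm]; ring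
      rw [this]
      have := le_max_left (1 - x) (0:ℝ)
      have := le_max_left (1 - c) (0:ℝ)
      linarith
    · have := le_max_right (1 - x) (0:ℝ)
      have := le_max_right (1 - c) (0:ℝ)
      linarith
  have hquad : (m - a) ^ 2 / (2 * b) =
      ((x - a) ^ 2 / (2 * b) + (c - a) ^ 2 / (2 * b)) / 2 - (x - c) ^ 2 / (8 * b) := by
    rw [hm]
    field_simp
    ring
  have hmin_m : max (1 - x) 0 + (x - a) ^ 2 / (2 * b) ≤ max (1 - m) 0 + (m - a) ^ 2 / (2 * b) :=
    hψ a m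
  have hle : (x - c) ^ 2 / (8 * b) ≤ 0 := by
    have := hmin_m
    rw [hquad] at this
    linarith [heq ▸ this]
  have hsq : (x - c) ^ 2 ≤ 0 := by
    by_contra h
    push_neg at h
    have : 0 < (x - c) ^ 2 / (8 * b) := div_pos h (by positivity)
    linarith
  have : x - c = 0 := by nlinarith [sq_nonneg (x - c)]
  linarith

/-- For `z ~ N(0,1)`, `b > 0` and the hinge-loss proximal map `ψ`, the function
`f₁ m = E[ψ(m + z) - m - z]` satisfies
`f₁ m = b Φ(1-b-m) + ∫_{1-b-m}^{1-m} (1-m-z) φ(z) dz`; it is nonnegative, continuous,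
and nonincreasing in `m`. -/
theorem stmt_12 (b : ℝ) (hb : 0 < b) (ψ : ℝ → ℝ)
    (hψ : ∀ a u : ℝ, max (1 - ψ a) 0 + (ψ a - a) ^ 2 / (2 * b) ≤
      max (1 - u) 0 + (u - a) ^ 2 / (2 * b))
    (f₁ : ℝ → ℝ)
    (hf₁ : ∀ m : ℝ, f₁ m = ∫ z, (ψ (m + z) - m - z) ∂(gaussianReal 0 1)) :
    (∀ m : ℝ, f₁ m =
      b * (gaussianReal 0 1 (Set.Iic (1 - b - m))).toReal +
        ∫ z in Set.Icc (1 - b - m) (1 - m), (1 - m - z) ∂(gaussianReal 0 1)) ∧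
    (∀ m, 0 ≤ f₁ m) ∧ Continuous f₁ ∧ Antitone f₁ := by
  classical
  set γ : Measure ℝ := gaussianReal 0 1 with hγ
  haveI : IsProbabilityMeasure γ := by rw [hγ]; infer_instance
  haveI : NoAtoms γ := by
    constructor
    intro x
    exact gaussianReal_absolutelyContinuous 0 one_ne_zero (measure_singleton x)
  -- the function g
  set g : ℝ → ℝ := fun x => min b (max (1 - x) 0) with hg
  have hgc : Continuous g := by
    apply Continuous.min continuous_const
    exact Continuous.max (by continuity) continuous_const
  have hg_nonneg : ∀ x, 0 ≤ g x := fun x => le_min hb.le (le_max_right _ _)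
  have hg_le : ∀ x, g x ≤ b := fun x => min_le_left _ _
  have hg_anti : Antitone g := by
    intro x y hxy
    apply min_le_min le_rfl
    apply max_le_max _ le_rfl
    linarith
  have hψg : ∀ x : ℝ, ψ x - x = g x := by
    intro x
    rw [hinge_prox_eq b hb ψ hψ x]
    simp [hg]
  -- f₁ m = ∫ g (m + z)
  have hf₁' : ∀ m : ℝ, f₁ m = ∫ z, g (m + z) ∂γ := by
    intro m
    rw [hf₁ m]
    congr 1
    ext z
    have := hψg (m + z)
    linarith
  have hint : ∀ m : ℝ, Integrable (fun z => g (m + z)) γ := by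
    intro m
    apply Integrable.mono' (integrable_const b)
    · exact ((hgc.comp (continuous_const.add continuous_id)).aestronglyMeasurable)
    · filter_upwards with z
      rw [Real.norm_eq_abs, abs_of_nonneg (hg_nonneg _)]
      exact hg_le _
  refine ⟨?_, ?_, ?_, ?_⟩
  · -- formula
    intro m
    rw [hf₁' m]
    have hdecomp : ∀ z : ℝ, g (m + z) =
        (Set.Iio (1 - b - m)).indicator (fun _ => b) z +
        (Set.Icc (1 - b - m) (1 - m)).indicator (fun z => 1 - m - z) z := by
      intro z
      rcases lt_or_ge z (1 - b - m) with h | h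
      · rw [Set.indicator_of_mem (Set.mem_Iio.mpr h), Set.indicator_of_notMem (by
          simp only [Set.mem_Icc, not_and_or]; left; push_neg; linarith)]
        simp only [hg]
        rw [min_eq_left (le_max_of_le_left (by linarith)), add_zero]
      · rw [Set.indicator_of_notMem (by simp [Set.mem_Iio]; linarith)]
        rcases le_or_gt z (1 - m) with h2 | h2
        · rw [Set.indicator_of_mem (Set.mem_Icc.mpr ⟨h, h2⟩)]
          simp only [hg]
          rw [max_eq_left (by linarith), min_eq_right (by linarith), zero_add]
          ring
        · rw [Set.indicator_of_notMem (by
            simp only [Set.mem_Icc, not_and_or]; right; push_neg; linarith)]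
          simp only [hg]
          rw [max_eq_right (by linarith), min_eq_right hb.le, zero_add]
    have hi1 : Integrable ((Set.Iio (1 - b - m)).indicator (fun _ : ℝ => b)) γ :=
      (integrable_const b).indicator measurableSet_Iio
    have hi2 : Integrable ((Set.Icc (1 - b - m) (1 - m)).indicator (fun z => 1 - m - z)) γ := by
      apply Integrable.mono' (integrable_const (b + |1 - m| + |1 - b - m|))
      · apply AEStronglyMeasurable.indicator _ measurableSet_Icc
        exact (by fun_prop : Continuous fun z : ℝ => 1 - m - z).aestronglyMeasurable
      · filter_upwards with z
        rw [Set.indicator]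
        split_ifs with h
        · rw [Real.norm_eq_abs]
          rcases h with ⟨h1, h2⟩
          rw [abs_of_nonneg (by linarith)]
          have h3 : 1 - m - z ≤ b := by linarith
          have := abs_nonneg (1 - m)
          have := abs_nonneg (1 - b - m)
          linarith
        · simp only [norm_zero]
          have := abs_nonneg (1 - m)
          have := abs_nonneg (1 - b - m)
          linarith
    rw [show (fun z => g (m + z)) = fun z =>
        (Set.Iio (1 - b - m)).indicator (fun _ => b) z +
        (Set.Icc (1 - b - m) (1 - m)).indicator (fun z => 1 - m - z) z from funext hdecomp,
      integral_add hi1 hi2, integral_indicator measurableSet_Iio,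
      integral_indicator measurableSet_Icc, setIntegral_const]
    have hio : γ (Set.Iio (1 - b - m)) = γ (Set.Iic (1 - b - m)) :=
      measure_congr (Iio_ae_eq_Iic' (gaussianReal_absolutelyContinuous 0 one_ne_zero (measure_singleton _)))
    rw [measureReal_def, hio, smul_eq_mul, mul_comm]
  · -- nonneg
    intro m
    rw [hf₁' m]
    exact integral_nonneg fun z => hg_nonneg _
  · -- continuity
    have : Continuous fun m => ∫ z, g (m + z) ∂γ := by
      rw [continuous_iff_continuousAt]
      intro m₀
      apply continuousAt_of_dominated (bound := fun _ => b)
      · filter_upwards with m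
        exact ((hgc.comp (continuous_const.add continuous_id)).aestronglyMeasurable)
      · filter_upwards with m
        filter_upwards with z
        rw [Real.norm_eq_abs, abs_of_nonneg (hg_nonneg _)]
        exact hg_le _
      · exact integrable_const b
      · filter_upwards with z
        exact (hgc.comp (continuous_id.add continuous_const)).continuousAt
    have heqf : f₁ = fun m => ∫ z, g (m + z) ∂γ := funext hf₁'
    rw [heqf]
    exact this
  · -- antitone
    intro m₁ m₂ hm
    rw [hf₁' m₁, hf₁' m₂]
    apply integral_mono (hint m₂) (hint m₁)
    intro z
    exact hg_anti (by linarith : m₁ + z ≤ m₂ + z)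
end

section
/- Let V: ℝ → ℝ be convex, differentiable, nonincreasing, with V(u) + u → 0 as u → -∞ and V(u) → 0 as u → ∞, and let ψ(a,b) be its proximal map for b > 0. Then ψ(a,b) - a → b as a → -∞ and ψ(a,b) - a → 0 as a → +∞. -/
open Filter

private lemma sq_tendsto_zero' {α : Type*} {f : α → ℝ} {l : Filter α}
    (h : Tendsto (fun x => (f x) ^ 2) l (nhds 0)) : Tendsto f l (nhds 0) := by
  rw [tendsto_zero_iff_abs_tendsto_zero]
  have : Tendsto (fun x => Real.sqrt ((f x) ^ 2)) l (nhds (Real.sqrt 0)) :=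
    (Real.continuous_sqrt.tendsto 0).comp h
  simpa [Real.sqrt_sq_eq_abs, Function.comp_def] using this

/-- For a convex, differentiable, nonincreasing loss with `V(u) + u → 0` at `-∞` and
`V(u) → 0` at `+∞`, the proximal shift satisfies `ψ(a,b) - a → b` as `a → -∞` and
`ψ(a,b) - a → 0` as `a → +∞`. -/
theorem stmt_17 (V : ℝ → ℝ) (hV : ConvexOn ℝ Set.univ V) (hVd : Differentiable ℝ V)
    (hVanti : Antitone V)
    (hVbot : Filter.Tendsto (fun u => V u + u) Filter.atBot (nhds 0))
    (hVtop : Filter.Tendsto V Filter.atTop (nhds 0))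
    (b : ℝ) (hb : 0 < b) (ψ : ℝ → ℝ)
    (hψ : ∀ a u : ℝ, V (ψ a) + (ψ a - a) ^ 2 / (2 * b) ≤ V u + (u - a) ^ 2 / (2 * b)) :
    Filter.Tendsto (fun a => ψ a - a) Filter.atBot (nhds b) ∧
    Filter.Tendsto (fun a => ψ a - a) Filter.atTop (nhds 0) := by
  have h2b : (0:ℝ) < 2 * b := by linarith
  -- V is nonnegative
  have hV0 : ∀ x, 0 ≤ V x := fun x =>
    le_of_tendsto hVtop (Filter.eventually_atTop.2 ⟨x, fun y hy => hVanti hy⟩)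
  -- slopes of V are at least -1
  have hslope : ∀ x y : ℝ, x < y → -1 ≤ (V y - V x) / (y - x) := by
    intro x y hxy
    have hlim : Tendsto (fun t => (V t - V y) / (t - y)) atBot (nhds (-1)) := by
      have h1 : Tendsto (fun t => (V y + y) - (V t + t)) atBot (nhds (V y + y)) := by
        simpa using hVbot.const_sub (V y + y)
      have h2 : Tendsto (fun t => y - t) atBot atTop := tendsto_atTop_add_const_left _ _ tendsto_neg_atBot_atTop
      have h3 : Tendsto (fun t => ((V y + y) - (V t + t)) / (y - t)) atBot (nhds 0) :=
        Tendsto.div_atTop h1 h2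
      have : Tendsto (fun t => ((V y + y) - (V t + t)) / (y - t) + (-1)) atBot (nhds (0 + (-1))) :=
        h3.add_const (-1)
      have heq : ∀ᶠ t in atBot, ((V y + y) - (V t + t)) / (y - t) + (-1) = (V t - V y) / (t - y) := by
        filter_upwards [eventually_lt_atBot y] with t ht
        have hne : t - y ≠ 0 := by intro h; nlinarith
        have hne' : y - t ≠ 0 := by intro h; nlinarith
        field_simp
        ring
      simpa using this.congr' heq
    refine le_of_tendsto hlim ?_
    filter_upwards [eventually_lt_atBot x] with t ht
    have := hV.secant_mono (a := y) (x := t) (y := x) (Set.mem_univ _) (Set.mem_univ _)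
      (Set.mem_univ _) (by intro h; nlinarith) (ne_of_lt hxy) (le_of_lt ht)
    calc (V t - V y) / (t - y) ≤ (V x - V y) / (x - y) := this
      _ = (V y - V x) / (y - x) := by rw [← neg_div_neg_eq]; ring_nf
  -- g := V + id is nonnegative
  have hg0 : ∀ x, 0 ≤ V x + x := by
    intro x
    refine le_of_tendsto hVbot ?_
    filter_upwards [eventually_lt_atBot x] with t ht
    have h := hslope t x ht
    have hpos : 0 < x - t := by linarith
    have := (le_div_iff₀ hpos).mp h
    linarith
  -- key inequality at +∞ : (ψ a - a)^2 ≤ 2b * V a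
  have htopineq : ∀ a : ℝ, (ψ a - a) ^ 2 ≤ 2 * b * V a := by
    intro a
    have := hψ a a
    simp at this
    have h1 : (ψ a - a) ^ 2 / (2 * b) ≤ V a := by nlinarith [hV0 (ψ a)]
    calc (ψ a - a) ^ 2 = (2 * b) * ((ψ a - a) ^ 2 / (2 * b)) := by field_simp
      _ ≤ 2 * b * V a := by nlinarith
  -- key inequality at -∞ : (ψ a - a - b)^2 ≤ 2b * (V (a+b) + (a+b))
  have hbotineq : ∀ a : ℝ, (ψ a - a - b) ^ 2 ≤ 2 * b * (V (a + b) + (a + b)) := by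
    intro a
    have h := hψ a (a + b)
    have hVψ : -(ψ a) ≤ V (ψ a) := by linarith [hg0 (ψ a)]
    have h2 : V (ψ a) + (ψ a - a) ^ 2 / (2 * b) ≤ V (a + b) + b / 2 := by
      have e : (a + b - a) ^ 2 / (2 * b) = b / 2 := by
        field_simp; ring
      rw [e] at h; exact h
    have h3 : -(ψ a) + (ψ a - a) ^ 2 / (2 * b) ≤ V (a + b) + b / 2 := by linarith
    have hexp : (ψ a - a - b) ^ 2 / (2 * b) = (ψ a - a) ^ 2 / (2 * b) - (ψ a - a) + b / 2 := by
      field_simp; ring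
    have h4 : (ψ a - a - b) ^ 2 / (2 * b) ≤ V (a + b) + (a + b) := by
      rw [hexp]; linarith
    calc (ψ a - a - b) ^ 2 = (2 * b) * ((ψ a - a - b) ^ 2 / (2 * b)) := by field_simp
      _ ≤ 2 * b * (V (a + b) + (a + b)) := by nlinarith
  constructor
  · -- atBot
    have hsq : Tendsto (fun a => (ψ a - a - b) ^ 2) atBot (nhds 0) := by
      have hub : Tendsto (fun a => 2 * b * (V (a + b) + (a + b))) atBot (nhds 0) := by
        have hcomp : Tendsto (fun a : ℝ => a + b) atBot atBot := tendsto_atBot_add_const_right _ _ tendsto_id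
        have := (hVbot.comp hcomp).const_mul (2 * b)
        simpa using this
      refine tendsto_of_tendsto_of_tendsto_of_le_of_le tendsto_const_nhds hub ?_ ?_
      · intro a; exact sq_nonneg _
      · intro a; exact hbotineq a
    have : Tendsto (fun a => ψ a - a - b) atBot (nhds 0) := sq_tendsto_zero' hsq
    have := this.add_const b
    simpa using this
  · -- atTop
    have hsq : Tendsto (fun a => (ψ a - a) ^ 2) atTop (nhds 0) := by
      have hub : Tendsto (fun a => 2 * b * V a) atTop (nhds 0) := by
        simpa using hVtop.const_mul (2 * b)
      refine tendsto_of_tendsto_of_tendsto_of_le_of_le tendsto_const_nhds hub ?_ ?_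
      · intro a; exact sq_nonneg _
      · intro a; exact htopineq a
    exact sq_tendsto_zero' hsq
end
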